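/- 1 − T, where T is the Tanimoto similarity T(A,B) = |A ∩ B|/|A ∪ B|, is a metric on finite nonempty subsets of a fixed universe (the Jaccard distance satisfies the triangle inequality). -/
import Mathlib

lemma jac_card_as_sum {α : Type*} [DecidableEq α] {U S : Finset α} (hS : S ⊆ U) :
    S.card = ∑ x ∈ U, if x ∈ S then 1 else 0 := by
  rw [← Finset.card_filter, Finset.filter_mem_eq_inter, Finset.inter_eq_right.mpr hS]

lemma jac_key {α : Type*} [DecidableEq α] (A B C : Finset α) :
    (A ∪ B).card + (B ∪ C).card + (A ∩ C).card
      = (A ∪ C).card + (A ∩ B).card + (B ∩ C).card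
        + 2 * (B \ (A ∪ C)).card + 2 * ((A ∩ C) \ B).card := by
  set U := A ∪ B ∪ C with hU
  have h1 : A ∪ B ⊆ U := Finset.union_subset
    (Finset.subset_union_left.trans Finset.subset_union_left)
    (Finset.subset_union_right.trans Finset.subset_union_left)
  have h2 : B ∪ C ⊆ U := Finset.union_subset
    (Finset.subset_union_right.trans Finset.subset_union_left)
    Finset.subset_union_right
  have h3 : A ∩ C ⊆ U := (Finset.inter_subset_left).trans
    (Finset.subset_union_left.trans Finset.subset_union_left)
  have h4 : A ∪ C ⊆ U := Finset.union_subset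
    (Finset.subset_union_left.trans Finset.subset_union_left)
    Finset.subset_union_right
  have h5 : A ∩ B ⊆ U := (Finset.inter_subset_left).trans
    (Finset.subset_union_left.trans Finset.subset_union_left)
  have h6 : B ∩ C ⊆ U := (Finset.inter_subset_right).trans Finset.subset_union_right
  have h7 : B \ (A ∪ C) ⊆ U := (Finset.sdiff_subset).trans
    (Finset.subset_union_right.trans Finset.subset_union_left)
  have h8 : (A ∩ C) \ B ⊆ U := (Finset.sdiff_subset).trans h3
  rw [jac_card_as_sum h1, jac_card_as_sum h2, jac_card_as_sum h3, jac_card_as_sum h4,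
    jac_card_as_sum h5, jac_card_as_sum h6, jac_card_as_sum h7, jac_card_as_sum h8,
    Finset.mul_sum, Finset.mul_sum, ← Finset.sum_add_distrib, ← Finset.sum_add_distrib,
    ← Finset.sum_add_distrib, ← Finset.sum_add_distrib, ← Finset.sum_add_distrib,
    ← Finset.sum_add_distrib]
  refine Finset.sum_congr rfl fun x hx => ?_
  by_cases ha : x ∈ A <;> by_cases hb : x ∈ B <;> by_cases hc : x ∈ C <;>
    simp [ha, hb, hc]

/-- The Jaccard distance `d(A,B) = 1 − |A ∩ B|/|A ∪ B|` is a metric on finite nonempty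
subsets: it is nonnegative, vanishes exactly on equal sets, is symmetric, and satisfies
the triangle inequality. -/
theorem jaccard_distance_metric {α : Type*} [DecidableEq α]
    (A B C : Finset α) (hA : A.Nonempty) (hB : B.Nonempty) (hC : C.Nonempty) :
    (0 ≤ 1 - ((A ∩ B).card : ℝ) / ((A ∪ B).card : ℝ)) ∧
    ((1 - ((A ∩ B).card : ℝ) / ((A ∪ B).card : ℝ) = 0) ↔ A = B) ∧
    (1 - ((A ∩ B).card : ℝ) / ((A ∪ B).card : ℝ) =
      1 - ((B ∩ A).card : ℝ) / ((B ∪ A).card : ℝ)) ∧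
    (1 - ((A ∩ C).card : ℝ) / ((A ∪ C).card : ℝ) ≤
      (1 - ((A ∩ B).card : ℝ) / ((A ∪ B).card : ℝ)) +
        (1 - ((B ∩ C).card : ℝ) / ((B ∪ C).card : ℝ))) := by
  have hAB0 : (0:ℝ) < ((A ∪ B).card : ℝ) := by
    exact_mod_cast Finset.card_pos.mpr (hA.mono Finset.subset_union_left)
  have hAC0 : (0:ℝ) < ((A ∪ C).card : ℝ) := by
    exact_mod_cast Finset.card_pos.mpr (hA.mono Finset.subset_union_left)
  have hBC0 : (0:ℝ) < ((B ∪ C).card : ℝ) := by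
    exact_mod_cast Finset.card_pos.mpr (hB.mono Finset.subset_union_left)
  have hle : ∀ X Y : Finset α, ((X ∩ Y).card : ℝ) ≤ ((X ∪ Y).card : ℝ) := fun X Y => by
    exact_mod_cast Finset.card_le_card (Finset.inter_subset_union)
  refine ⟨?_, ?_, ?_, ?_⟩
  · have := (div_le_one hAB0).mpr (hle A B)
    linarith
  · constructor
    · intro h
      have h1 : ((A ∩ B).card : ℝ) / ((A ∪ B).card : ℝ) = 1 := by linarith
      rw [div_eq_one_iff_eq (ne_of_gt hAB0)] at h1
      have h2 : (A ∪ B).card ≤ (A ∩ B).card := by exact_mod_cast h1.ge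
      have h3 : A ∩ B = A ∪ B :=
        Finset.eq_of_subset_of_card_le Finset.inter_subset_union h2
      have hAB : A ⊆ B := fun x hx =>
        (Finset.mem_inter.mp (h3 ▸ Finset.mem_union_left B hx)).2
      have hBA : B ⊆ A := fun x hx =>
        (Finset.mem_inter.mp (h3 ▸ Finset.mem_union_right A hx)).1
      exact Finset.Subset.antisymm hAB hBA
    · rintro rfl
      rw [Finset.inter_self, Finset.union_self, div_self (by positivity), sub_self]
  · rw [Finset.inter_comm, Finset.union_comm]
  · -- triangle inequality
    have key : ((A ∪ B).card : ℝ) + ((B ∪ C).card : ℝ) + ((A ∩ C).card : ℝ)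
        = ((A ∪ C).card : ℝ) + ((A ∩ B).card : ℝ) + ((B ∩ C).card : ℝ)
          + 2 * ((B \ (A ∪ C)).card : ℝ) + 2 * (((A ∩ C) \ B).card : ℝ) := by
      exact_mod_cast jac_key A B C
    have hF2 : ((A ∪ B ∪ C).card : ℝ) = ((A ∪ C).card : ℝ) + ((B \ (A ∪ C)).card : ℝ) := by
      have h : (B \ (A ∪ C)).card + (A ∪ C).card = (B ∪ (A ∪ C)).card :=
        Finset.card_sdiff_add_card B (A ∪ C)
      have he : B ∪ (A ∪ C) = A ∪ B ∪ C := by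
        ext x; simp [Finset.mem_union]; tauto
      rw [he] at h
      exact_mod_cast h.symm.trans (Nat.add_comm _ _)
    have hABn : ((A ∪ B).card : ℝ) ≤ ((A ∪ B ∪ C).card : ℝ) := by
      exact_mod_cast Finset.card_le_card (Finset.subset_union_left (s₂ := C))
    have hBCn : ((B ∪ C).card : ℝ) ≤ ((A ∪ B ∪ C).card : ℝ) := by
      refine Nat.cast_le.mpr (Finset.card_le_card (Finset.union_subset ?_ ?_))
      · exact Finset.subset_union_right.trans Finset.subset_union_left
      · exact Finset.subset_union_right
    set iAB := ((A ∩ B).card : ℝ)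
    set uAB := ((A ∪ B).card : ℝ)
    set iBC := ((B ∩ C).card : ℝ)
    set uBC := ((B ∪ C).card : ℝ)
    set iAC := ((A ∩ C).card : ℝ)
    set uAC := ((A ∪ C).card : ℝ)
    set n := ((A ∪ B ∪ C).card : ℝ)
    set q := (((B \ (A ∪ C)).card : ℝ))
    set t := ((((A ∩ C) \ B).card : ℝ))
    have hq0 : (0:ℝ) ≤ q := by positivity
    have ht0 : (0:ℝ) ≤ t := by positivity
    have hiAC0 : (0:ℝ) ≤ iAC := by positivity
    have hn0 : (0:ℝ) < n := by linarith
    have hdAB : 1 - iAB / uAB = (uAB - iAB) / uAB := by field_simp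
    have hdBC : 1 - iBC / uBC = (uBC - iBC) / uBC := by field_simp
    have hdAC : 1 - iAC / uAC = (uAC - iAC) / uAC := by field_simp
    rw [hdAB, hdBC, hdAC]
    have s1 : (uAB - iAB) / n ≤ (uAB - iAB) / uAB :=
      div_le_div_of_nonneg_left (by linarith [hle A B]) hAB0 hABn
    have s2 : (uBC - iBC) / n ≤ (uBC - iBC) / uBC :=
      div_le_div_of_nonneg_left (by linarith [hle B C]) hBC0 hBCn
    have s3 : (uAC - iAC) / uAC ≤ ((uAB - iAB) + (uBC - iBC)) / n := by
      rw [div_le_div_iff₀ hAC0 hn0]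
      nlinarith [mul_nonneg hq0 (le_of_lt hAC0), mul_nonneg ht0 (le_of_lt hAC0),
        mul_nonneg hiAC0 hq0]
    calc (uAC - iAC) / uAC ≤ ((uAB - iAB) + (uBC - iBC)) / n := s3
      _ = (uAB - iAB) / n + (uBC - iBC) / n := by ring
      _ ≤ (uAB - iAB) / uAB + (uBC - iBC) / uBC := add_le_add s1 s2
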